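/- Let A be a diagonal n×n matrix with diagonal entries β₁₁,…,βₙₙ ∈ (0,1), and let C₁, C₂ ⊆ B[0,1] be nonempty compact sets which are BG linked and satisfy τ_A(C₁) + τ_A(C₂) > 0. Assume further that C₁ ∩ C₂ = ∅ and that there exist a bounded gap G¹ of C₁ with ∂G¹ ⊄ E² (the unbounded gap of C₂) and a bounded gap G² of C₂ with ∂G² ⊄ E¹ (the unbounded gap of C₁). Then there exists a sequence of pairs (G¹_{s_i}, G²_{t_i})_{i∈ℕ} of linked bounded gaps of C₁ and C₂, with s_i, t_i ∈ ℕ, such that for every i either s_{i+1} = s_i and t_{i+1} > t_i, or s_{i+1} > s_i and t_{i+1} = t_i; moreover at least one of diam(G¹_{s_i}) → 0 or diam(G²_{t_i}) → 0 as i → ∞. -/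

import Mathlib

open Metric Set Topology Filter
open scoped ENNReal Classical

noncomputable section

/-- The affine box `A^s(B[0,1]) + z`, where `A` is the diagonal matrix with
diagonal entries `β j`, so `A^s(B[0,1]) + z = {x : |x j - z j| ≤ (β j)^s for all j}`. -/
def affBox {n : ℕ} (β : Fin n → ℝ) (s : ℝ) (z : Fin n → ℝ) : Set (Fin n → ℝ) :=
  {x | ∀ j, |x j - z j| ≤ (β j) ^ s}

/-- The size `S_A(F)` of `F` with respect to the diagonal matrix with entries `β`. -/
def sizeWrt {n : ℕ} (β : Fin n → ℝ) (F : Set (Fin n → ℝ)) : ℝ :=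
  sInf {t | 0 < t ∧ ∃ z, F ⊆ affBox β (1 / t) z}

/-- `G` is a gap (a connected component of the complement) of `C`. -/
def IsGap {n : ℕ} (C G : Set (Fin n → ℝ)) : Prop :=
  ∃ x ∈ Cᶜ, G = connectedComponentIn Cᶜ x

/-- `G` is a bounded gap of `C`. -/
def IsBoundedGap {n : ℕ} (C G : Set (Fin n → ℝ)) : Prop :=
  IsGap C G ∧ Bornology.IsBounded G

/-- The unbounded gap `E` of `C`: the union of the unbounded connected
components of the complement of `C`. -/
def unboundedGap {n : ℕ} (C : Set (Fin n → ℝ)) : Set (Fin n → ℝ) :=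
  {x | x ∈ Cᶜ ∧ ¬ Bornology.IsBounded (connectedComponentIn Cᶜ x)}

/-- An enumeration `(G_k)_{k ∈ J}` of the bounded gaps of `C`, in non-increasing
order of size with respect to `β`. -/
structure GapEnum {n : ℕ} (β : Fin n → ℝ) (C : Set (Fin n → ℝ)) where
  J : Set ℕ
  G : ℕ → Set (Fin n → ℝ)
  downward : ∀ k l : ℕ, k ≤ l → l ∈ J → k ∈ J
  isGap : ∀ k ∈ J, IsBoundedGap C (G k)
  inj : ∀ k ∈ J, ∀ l ∈ J, G k = G l → k = l
  surj : ∀ G', IsBoundedGap C G' → ∃ k ∈ J, G k = G'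
  anti : ∀ k ∈ J, ∀ l ∈ J, k ≤ l → sizeWrt β (G l) ≤ sizeWrt β (G k)

/-- The gap distance `GD_A(m, C)` with respect to the enumeration `e`. -/
def gapDist {n : ℕ} (β : Fin n → ℝ) (C : Set (Fin n → ℝ)) (e : GapEnum β C) (m : ℕ) : ℝ :=
  sInf {t | 0 < t ∧ ∃ z, (affBox β (1 / t) z ∩ e.G m).Nonempty ∧
    (affBox β (1 / t) z ∩ ((⋃ i ∈ e.J ∩ Iio m, e.G i) ∪ unboundedGap C)).Nonempty}

/-- Extended-real-valued inverse, with `0⁻¹ = ∞`. -/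
def invE (s : ℝ) : EReal := if s = 0 then ⊤ else ((s⁻¹ : ℝ) : EReal)

/-- Affine thickness `τ_A(C)` of `C` with respect to the diagonal matrix with entries `β`,
computed from the enumeration `e` of the bounded gaps of `C`. -/
def thicknessA {n : ℕ} (β : Fin n → ℝ) (C : Set (Fin n → ℝ)) (e : GapEnum β C) : EReal :=
  if e.J = ∅ then (if (interior C).Nonempty then ⊤ else ⊥)
  else if ∃ k ∈ e.J, gapDist β C e k = 0 then ⊥
  else ⨅ k ∈ e.J, (invE (sizeWrt β (e.G k)) - invE (gapDist β C e k))

/-- Open sets `U`, `V` are linked. -/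
def Linked {n : ℕ} (U V : Set (Fin n → ℝ)) : Prop :=
  (U ∩ V).Nonempty ∧ (frontier U \ V).Nonempty ∧ (frontier V \ U).Nonempty

/-- Compact sets `C₁`, `C₂` are BG linked. -/
def BGLinked {n : ℕ} (C₁ C₂ : Set (Fin n → ℝ)) : Prop :=
  ∀ G₁ G₂, IsBoundedGap C₁ G₁ → IsBoundedGap C₂ G₂ → Linked G₁ G₂ ∨ G₁ ∩ G₂ = ∅

/-- `C₁, C₂ ⊆ B[0,1]` are a strongly refinable pair for the diagonal matrix with entries `β`. -/
def StronglyRefinable {n : ℕ} (β : Fin n → ℝ) (C₁ C₂ : Set (Fin n → ℝ)) : Prop :=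
  ∃ C₁' C₂' : Set (Fin n → ℝ), IsCompact C₁' ∧ IsCompact C₂' ∧
    C₁' ⊆ closedBall 0 1 ∧ C₂' ⊆ closedBall 0 1 ∧
    BGLinked C₁' C₂' ∧
    (∃ G₁, IsBoundedGap C₁' G₁ ∧ ¬ frontier G₁ ⊆ unboundedGap C₂') ∧
    (∃ G₂, IsBoundedGap C₂' G₂ ∧ ¬ frontier G₂ ⊆ unboundedGap C₁') ∧
    (∀ e₁ : GapEnum β C₁, ∀ e₂ : GapEnum β C₂, ∃ e₁' : GapEnum β C₁', ∃ e₂' : GapEnum β C₂',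
      thicknessA β C₁ e₁ + thicknessA β C₂ e₂ ≤ thicknessA β C₁' e₁' + thicknessA β C₂' e₂') ∧
    C₁' ∩ C₂' ⊆ C₁ ∩ C₂

/-- The distance between two sets. -/
def setDist {n : ℕ} (A B : Set (Fin n → ℝ)) : ℝ :=
  sInf {r | ∃ a ∈ A, ∃ b ∈ B, r = dist a b}

/-- An enumeration of the bounded gaps of `C` in non-increasing order of diameter. -/
structure DiamEnum {n : ℕ} (C : Set (Fin n → ℝ)) where
  J : Set ℕ
  G : ℕ → Set (Fin n → ℝ)
  downward : ∀ k l : ℕ, k ≤ l → l ∈ J → k ∈ J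
  isGap : ∀ k ∈ J, IsBoundedGap C (G k)
  inj : ∀ k ∈ J, ∀ l ∈ J, G k = G l → k = l
  surj : ∀ G', IsBoundedGap C G' → ∃ k ∈ J, G k = G'
  anti : ∀ k ∈ J, ∀ l ∈ J, k ≤ l → Metric.diam (G l) ≤ Metric.diam (G k)

/-- The Falconer–Yavicoli thickness `τ(C)`, computed from the enumeration `e` of
the bounded gaps of `C` in non-increasing order of diameter. -/
def FYthickness {n : ℕ} (C : Set (Fin n → ℝ)) (e : DiamEnum C) : ℝ≥0∞ :=
  if e.J = ∅ then (if (interior C).Nonempty then ⊤ else 0)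
  else ⨅ k ∈ e.J, ENNReal.ofReal
    (setDist (e.G k) (unboundedGap C ∪ ⋃ j ∈ e.J ∩ Iio k, e.G j) / Metric.diam (e.G k))

end

noncomputable section AuxLemmas

open Bornology

/-- A preconnected set meeting `U` and its complement meets the frontier of `U`. -/
lemma preconn_inter_frontier {X : Type*} [TopologicalSpace X] {s U : Set X}
    (hs : IsPreconnected s) (h1 : (s ∩ U).Nonempty) (h2 : (s \ U).Nonempty) :
    (s ∩ frontier U).Nonempty := by
  by_contra h
  rw [Set.not_nonempty_iff_eq_empty] at h
  have hnf : ∀ x ∈ s, x ∉ frontier U := fun x hx hf =>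
    (Set.eq_empty_iff_forall_notMem.mp h x) ⟨hx, hf⟩
  have hsub : s ⊆ interior U ∪ (closure U)ᶜ := by
    intro x hx
    by_cases hxU : x ∈ closure U
    · left
      by_contra hxi
      exact hnf x hx ⟨hxU, hxi⟩
    · right; exact hxU
  obtain ⟨a, ha, haU⟩ := h1
  obtain ⟨b, hb, hbU⟩ := h2
  have haI : a ∈ interior U := by
    rcases hsub ha with h' | h'
    · exact h'
    · exact absurd (subset_closure haU) h'
  have hbC : b ∈ (closure U)ᶜ := by
    rcases hsub hb with h' | h'
    · exact absurd (interior_subset h') hbU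
    · exact h'
  obtain ⟨y, hy⟩ := hs (interior U) (closure U)ᶜ isOpen_interior isClosed_closure.isOpen_compl
    hsub ⟨a, ha, haI⟩ ⟨b, hb, hbC⟩
  exact hy.2.2 (subset_closure (interior_subset hy.2.1))

variable {n : ℕ}

lemma gap_isOpen {C G : Set (Fin n → ℝ)} (hC : IsClosed C) (h : IsGap C G) : IsOpen G := by
  obtain ⟨x, -, rfl⟩ := h
  exact hC.isOpen_compl.connectedComponentIn

lemma gap_nonempty {C G : Set (Fin n → ℝ)} (h : IsGap C G) : G.Nonempty := by
  obtain ⟨x, hx, rfl⟩ := h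
  exact ⟨x, mem_connectedComponentIn hx⟩

lemma gap_preconn {C G : Set (Fin n → ℝ)} (h : IsGap C G) : IsPreconnected G := by
  obtain ⟨x, hx, rfl⟩ := h
  exact isPreconnected_connectedComponentIn

lemma gap_subset_compl {C G : Set (Fin n → ℝ)} (h : IsGap C G) : G ⊆ Cᶜ := by
  obtain ⟨x, hx, rfl⟩ := h
  exact connectedComponentIn_subset _ _

lemma gap_mem_of_closure {C G : Set (Fin n → ℝ)} (hC : IsClosed C) (h : IsGap C G)
    {y : Fin n → ℝ} (hy : y ∈ Cᶜ) (hyG : y ∈ closure G) : y ∈ G := by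
  obtain ⟨x, hx, rfl⟩ := h
  have hopen : IsOpen (connectedComponentIn Cᶜ y) := hC.isOpen_compl.connectedComponentIn
  have hnb : connectedComponentIn Cᶜ y ∈ nhds y :=
    hopen.mem_nhds (mem_connectedComponentIn hy)
  obtain ⟨w, hw1, hw2⟩ := mem_closure_iff_nhds.mp hyG _ hnb
  rw [connectedComponentIn_eq hw2, ← connectedComponentIn_eq hw1]
  exact mem_connectedComponentIn hy

lemma gap_frontier_subset {C G : Set (Fin n → ℝ)} (hC : IsClosed C) (h : IsGap C G) :
    frontier G ⊆ C := by
  intro y hy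
  by_contra hyC
  have hyG : y ∈ G := gap_mem_of_closure hC h hyC hy.1
  rw [← (gap_isOpen hC h).interior_eq] at hyG
  exact hy.2 hyG

lemma mem_unboundedGap_of_one_lt_norm {C : Set (Fin n → ℝ)} (hsub : C ⊆ closedBall 0 1)
    {y : Fin n → ℝ} (hy : 1 < ‖y‖) : y ∈ unboundedGap C := by
  have hyC : y ∈ Cᶜ := by
    intro hyC
    have := mem_closedBall_zero_iff.mp (hsub hyC)
    linarith
  refine ⟨hyC, fun hb => ?_⟩
  set K : Set (Fin n → ℝ) := (fun s : ℝ => s • y) '' Set.Ici (1 : ℝ) with hK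
  have hKpre : IsPreconnected K :=
    isPreconnected_Ici.image _ (continuous_id.smul continuous_const).continuousOn
  have hnorm : ∀ s : ℝ, 1 ≤ s → ‖s • y‖ = s * ‖y‖ := by
    intro s hs
    rw [norm_smul, Real.norm_eq_abs, abs_of_nonneg (by linarith)]
  have hKsub : K ⊆ Cᶜ := by
    rintro - ⟨s, hs, rfl⟩
    intro hc
    have h1 := mem_closedBall_zero_iff.mp (hsub hc)
    rw [hnorm s hs] at h1
    nlinarith [Set.mem_Ici.mp hs]
  have hyK : y ∈ K := ⟨1, Set.mem_Ici.mpr le_rfl, one_smul _ _⟩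
  have hKcomp : K ⊆ connectedComponentIn Cᶜ y :=
    hKpre.subset_connectedComponentIn hyK hKsub
  have hKb : IsBounded K := hb.subset hKcomp
  obtain ⟨R, hR⟩ := (Metric.isBounded_iff_subset_closedBall 0).mp hKb
  have hmem : (max 1 (R + 1)) • y ∈ K := ⟨_, Set.mem_Ici.mpr (le_max_left _ _), rfl⟩
  have := mem_closedBall_zero_iff.mp (hR hmem)
  rw [hnorm _ (le_max_left _ _)] at this
  have h1 : R + 1 ≤ max 1 (R + 1) := le_max_right _ _
  nlinarith [le_max_left 1 (R + 1)]

lemma bgap_subset_closedBall {C G : Set (Fin n → ℝ)} (hsub : C ⊆ closedBall 0 1)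
    (h : IsBoundedGap C G) : G ⊆ closedBall 0 1 := by
  intro x hxG
  by_contra hx
  have h1 : 1 < ‖x‖ := by rwa [mem_closedBall_zero_iff, not_le] at hx
  have hx' := mem_unboundedGap_of_one_lt_norm hsub h1
  obtain ⟨hgap, hbdd⟩ := h
  obtain ⟨x₀, hx₀, rfl⟩ := hgap
  have heq : connectedComponentIn Cᶜ x₀ = connectedComponentIn Cᶜ x :=
    connectedComponentIn_eq hxG
  exact hx'.2 (heq ▸ hbdd)

/-! ### size and gap-distance sets -/

def sizeSet (β : Fin n → ℝ) (F : Set (Fin n → ℝ)) : Set ℝ :=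
  {t | 0 < t ∧ ∃ z, F ⊆ affBox β (1 / t) z}

lemma sizeWrt_eq (β : Fin n → ℝ) (F : Set (Fin n → ℝ)) : sizeWrt β F = sInf (sizeSet β F) := rfl

def gdSet (β : Fin n → ℝ) (C : Set (Fin n → ℝ)) (e : GapEnum β C) (m : ℕ) : Set ℝ :=
  {t | 0 < t ∧ ∃ z, (affBox β (1 / t) z ∩ e.G m).Nonempty ∧
    (affBox β (1 / t) z ∩ ((⋃ i ∈ e.J ∩ Iio m, e.G i) ∪ unboundedGap C)).Nonempty}

lemma gapDist_eq (β : Fin n → ℝ) (C : Set (Fin n → ℝ)) (e : GapEnum β C) (m : ℕ) :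
    gapDist β C e m = sInf (gdSet β C e m) := rfl

variable {β : Fin n → ℝ}

lemma isClosed_affBox {s : ℝ} {z : Fin n → ℝ} : IsClosed (affBox β s z) := by
  have : affBox β s z = ⋂ j, {x : Fin n → ℝ | |x j - z j| ≤ (β j) ^ s} := by
    ext x; simp [affBox, Set.mem_iInter]
  rw [this]
  exact isClosed_iInter fun j =>
    IsClosed.preimage (((continuous_apply j).sub continuous_const).abs) isClosed_Iic

lemma affBox_mono (hβ : ∀ j, β j ∈ Set.Ioo (0 : ℝ) 1) {u v : ℝ} (hu : 0 < u) (huv : u ≤ v)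
    (z : Fin n → ℝ) : affBox β (1 / u) z ⊆ affBox β (1 / v) z := by
  intro x hx j
  refine (hx j).trans ?_
  exact Real.rpow_le_rpow_of_exponent_ge (hβ j).1 (hβ j).2.le
    (one_div_le_one_div_of_le hu huv)

lemma sizeSet_upward (hβ : ∀ j, β j ∈ Set.Ioo (0 : ℝ) 1) {F : Set (Fin n → ℝ)} {u v : ℝ}
    (hu : u ∈ sizeSet β F) (huv : u ≤ v) : v ∈ sizeSet β F := by
  obtain ⟨hu0, z, hz⟩ := hu
  exact ⟨hu0.trans_le huv, z, hz.trans (affBox_mono hβ hu0 huv z)⟩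

lemma gdSet_upward (hβ : ∀ j, β j ∈ Set.Ioo (0 : ℝ) 1) {C : Set (Fin n → ℝ)} {e : GapEnum β C}
    {m : ℕ} {u v : ℝ} (hu : u ∈ gdSet β C e m) (huv : u ≤ v) : v ∈ gdSet β C e m := by
  obtain ⟨hu0, z, h1, h2⟩ := hu
  exact ⟨hu0.trans_le huv, z,
    h1.mono (Set.inter_subset_inter_left _ (affBox_mono hβ hu0 huv z)),
    h2.mono (Set.inter_subset_inter_left _ (affBox_mono hβ hu0 huv z))⟩

lemma sizeWrt_nonneg (β : Fin n → ℝ) (F : Set (Fin n → ℝ)) : 0 ≤ sizeWrt β F :=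
  Real.sInf_nonneg fun _ ht => ht.1.le

lemma gapDist_nonneg (β : Fin n → ℝ) (C : Set (Fin n → ℝ)) (e : GapEnum β C) (m : ℕ) :
    0 ≤ gapDist β C e m :=
  Real.sInf_nonneg fun _ ht => ht.1.le

lemma mem_sizeSet_of_lt (hβ : ∀ j, β j ∈ Set.Ioo (0 : ℝ) 1) {F : Set (Fin n → ℝ)}
    (hne : (sizeSet β F).Nonempty) {v : ℝ} (hv : sizeWrt β F < v) : v ∈ sizeSet β F := by
  rw [sizeWrt_eq] at hv
  obtain ⟨w, hw, hwv⟩ := (csInf_lt_iff ⟨0, fun t ht => ht.1.le⟩ hne).mp hv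
  exact sizeSet_upward hβ hw hwv.le

lemma gapDist_le {C : Set (Fin n → ℝ)} {e : GapEnum β C} {m : ℕ} {u : ℝ}
    (hu : u ∈ gdSet β C e m) : gapDist β C e m ≤ u :=
  csInf_le ⟨0, fun _ ht => ht.1.le⟩ hu

lemma gapDist_eq_zero_of_sizeSet_empty (hβ : ∀ j, β j ∈ Set.Ioo (0 : ℝ) 1)
    {C : Set (Fin n → ℝ)} (hsub : C ⊆ closedBall 0 1) {e : GapEnum β C}
    {k : ℕ} (hk : k ∈ e.J) (hempty : sizeSet β (e.G k) = ∅) : gapDist β C e k = 0 := by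
  set G := e.G k with hG
  have hgap := e.isGap k hk
  have hGne : G.Nonempty := gap_nonempty hgap.1
  have hGsub : G ⊆ closedBall 0 1 := bgap_subset_closedBall hsub hgap
  have hb : ∀ x ∈ G, ∀ j, |x j| ≤ 1 := by
    intro x hx j
    have h1 := mem_closedBall_zero_iff.mp (hGsub hx)
    simpa using (norm_le_pi_norm x j).trans h1
  set A : Fin n → Set ℝ := fun j => (fun x => x j) '' G with hA
  have hAne : ∀ j, (A j).Nonempty := fun j => hGne.image _
  have hAbddA : ∀ j, BddAbove (A j) := by
    rintro j; exact ⟨1, by rintro - ⟨x, hx, rfl⟩; exact (abs_le.mp (hb x hx j)).2⟩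
  have hAbddB : ∀ j, BddBelow (A j) := by
    rintro j; exact ⟨-1, by rintro - ⟨x, hx, rfl⟩; exact (abs_le.mp (hb x hx j)).1⟩
  have hsup1 : ∀ j, sSup (A j) ≤ 1 := fun j =>
    csSup_le (hAne j) (by rintro - ⟨x, hx, rfl⟩; exact (abs_le.mp (hb x hx j)).2)
  have hinf1 : ∀ j, -1 ≤ sInf (A j) := fun j =>
    le_csInf (hAne j) (by rintro - ⟨x, hx, rfl⟩; exact (abs_le.mp (hb x hx j)).1)
  have key : ∀ t : ℝ, 0 < t → ∃ j, 2 * (β j) ^ (1 / t) < sSup (A j) - sInf (A j) := by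
    intro t ht
    by_contra hcon
    push_neg at hcon
    have hmem : t ∈ sizeSet β G := by
      refine ⟨ht, fun j => (sSup (A j) + sInf (A j)) / 2, fun x hx j => ?_⟩
      have h1 : x j ≤ sSup (A j) := le_csSup (hAbddA j) ⟨x, hx, rfl⟩
      have h2 : sInf (A j) ≤ x j := csInf_le (hAbddB j) ⟨x, hx, rfl⟩
      have h3 := hcon j
      rw [abs_le]
      constructor <;> [linarith; linarith]
    rw [hempty] at hmem
    exact hmem
  have hkey' : ∀ m : ℕ, (0:ℝ) < (m : ℝ) + 1 := fun m => by positivity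
  set f : ℕ → Fin n := fun m => (key ((m : ℝ) + 1) (hkey' m)).choose with hf
  have hfspec : ∀ m : ℕ,
      2 * (β (f m)) ^ (1 / ((m : ℝ) + 1)) < sSup (A (f m)) - sInf (A (f m)) := fun m =>
    (key ((m : ℝ) + 1) (hkey' m)).choose_spec
  obtain ⟨j, hj⟩ := Finite.exists_infinite_fiber f
  replace hj : (f ⁻¹' {j}).Infinite := Set.infinite_coe_iff.mp hj
  -- show sSup (A j) = 1
  have hwle : sSup (A j) - sInf (A j) ≤ 2 := by have := hsup1 j; have := hinf1 j; linarith
  have hwge : 2 ≤ sSup (A j) - sInf (A j) := by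
    by_contra hlt
    push_neg at hlt
    have hc : Continuous fun x : ℝ => 2 * (β j) ^ x := by
      have hfun : (fun x : ℝ => 2 * (β j) ^ x)
          = fun x : ℝ => 2 * Real.exp (Real.log (β j) * x) := by
        funext x; rw [Real.rpow_def_of_pos (hβ j).1]
      rw [hfun]
      exact continuous_const.mul (Real.continuous_exp.comp (continuous_const.mul continuous_id))
    have htend : Filter.Tendsto (fun m : ℕ => 2 * (β j) ^ (1 / ((m : ℝ) + 1)))
        Filter.atTop (nhds 2) := by
      have h0 := (hc.tendsto 0).comp tendsto_one_div_add_atTop_nhds_zero_nat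
      simpa [Real.rpow_zero, Function.comp_def] using h0
    have hev : ∀ᶠ m : ℕ in Filter.atTop,
        sSup (A j) - sInf (A j) < 2 * (β j) ^ (1 / ((m : ℝ) + 1)) :=
      htend.eventually (eventually_gt_nhds hlt)
    obtain ⟨m₀, hm₀⟩ := Filter.eventually_atTop.mp hev
    obtain ⟨m, hmf, hm⟩ := hj.exists_gt m₀
    have hfm : f m = j := hmf
    have := hfspec m
    rw [hfm] at this
    exact absurd (hm₀ m hm.le) (not_lt.mpr this.le)
  have hsupj : sSup (A j) = 1 := le_antisymm (hsup1 j) (by have := hinf1 j; linarith)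
  -- now every positive t lies in the gdSet
  have hmemgd : ∀ t : ℝ, 0 < t → t ∈ gdSet β C e k := by
    intro t ht
    set r : ℝ := (β j) ^ (1 / t) with hr
    have hr0 : 0 < r := Real.rpow_pos_of_pos (hβ j).1 _
    obtain ⟨a, haA, har⟩ := exists_lt_of_lt_csSup (hAne j) (by rw [hsupj]; linarith : 1 - r < sSup (A j))
    obtain ⟨x, hxG, rfl⟩ := haA
    set y : Fin n → ℝ := x + Pi.single j (2 * r) with hy
    set z : Fin n → ℝ := x + Pi.single j r with hz
    have hyj : y j = x j + 2 * r := by simp [hy]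
    have hynorm : 1 < ‖y‖ := by
      have h1 : |y j| ≤ ‖y‖ := by simpa using norm_le_pi_norm y j
      have h2 : 1 + r ≤ y j := by rw [hyj]; linarith
      have h3 : y j ≤ |y j| := le_abs_self _
      linarith
    have hyE : y ∈ unboundedGap C := mem_unboundedGap_of_one_lt_norm hsub hynorm
    refine ⟨ht, z, ⟨x, ?_, hxG⟩, ⟨y, ?_, Or.inr hyE⟩⟩
    · intro i
      by_cases hij : i = j
      · subst hij
        simp only [hz, Pi.add_apply, Pi.single_eq_same]
        rw [show x i - (x i + r) = -r by ring, abs_neg, abs_of_pos hr0]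
      · simp only [hz, Pi.add_apply, Pi.single_eq_of_ne hij]
        simpa using (Real.rpow_pos_of_pos (hβ i).1 (1/t)).le
    · intro i
      by_cases hij : i = j
      · subst hij
        simp only [hy, hz, Pi.add_apply, Pi.single_eq_same]
        rw [show x i + 2 * r - (x i + r) = r by ring, abs_of_pos hr0]
      · simp only [hy, hz, Pi.add_apply, Pi.single_eq_of_ne hij]
        simpa using (Real.rpow_pos_of_pos (hβ i).1 (1/t)).le
  -- conclude sInf = 0
  refine le_antisymm ?_ (gapDist_nonneg β C e k)
  by_contra hpos
  push_neg at hpos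
  have h2 := gapDist_le (hmemgd (gapDist β C e k / 2) (by linarith))
  linarith

lemma sizeWrt_pos_of_gap (hn : 0 < n) (hβ : ∀ j, β j ∈ Set.Ioo (0 : ℝ) 1)
    {G : Set (Fin n → ℝ)} (hG : IsOpen G) (hGne : G.Nonempty)
    (hne : (sizeSet β G).Nonempty) : 0 < sizeWrt β G := by
  obtain ⟨p, hp⟩ := hGne
  obtain ⟨δ, hδ0, hδ⟩ := Metric.isOpen_iff.mp hG p hp
  set j : Fin n := ⟨0, hn⟩
  set c : ℝ := min δ 1 / 4 with hc
  have hc0 : 0 < c := by have := lt_min_iff.mpr ⟨hδ0, one_pos⟩; positivity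
  have hc1 : c < 1 := by
    have : min δ 1 ≤ 1 := min_le_right _ _
    rw [hc]; linarith
  have hcδ : c < δ := by
    have : min δ 1 ≤ δ := min_le_left _ _
    rw [hc]; linarith
  have hmem : ∀ σ : ℝ, |σ| ≤ c → p + Pi.single j σ ∈ G := by
    intro σ hσ
    apply hδ
    rw [Metric.mem_ball]
    have : dist (p + Pi.single j σ) p ≤ c := by
      rw [dist_pi_le_iff hc0.le]
      intro i
      by_cases hij : i = j
      · simp only [Pi.add_apply, hij, Pi.single_eq_same]
        rw [Real.dist_eq, show p j + σ - p j = σ by ring]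
        exact hσ
      · simp only [Pi.add_apply, Pi.single_eq_of_ne hij, add_zero, dist_self]
        exact hc0.le
    linarith
  have hclaim : ∀ u ∈ sizeSet β G, c ≤ (β j) ^ (1 / u) := by
    rintro u ⟨hu0, z, hz⟩
    have h1 := hz (hmem c (by rw [abs_of_pos hc0])) j
    have h2 := hz (hmem (-c) (by rw [abs_neg, abs_of_pos hc0])) j
    simp only [Pi.add_apply, Pi.single_eq_same] at h1 h2
    have h1' := abs_le.mp h1
    have h2' := abs_le.mp h2
    linarith [h1'.1, h1'.2, h2'.1, h2'.2]
  set D : ℝ := Real.log c / Real.log (β j) with hD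
  have hlogβ : Real.log (β j) < 0 := Real.log_neg (hβ j).1 (hβ j).2
  have hlogc : Real.log c < 0 := Real.log_neg hc0 hc1
  have hD0 : 0 < D := div_pos_of_neg_of_neg hlogc hlogβ
  have hbound : ∀ u ∈ sizeSet β G, 1 / D ≤ u := by
    intro u hu
    have hu0 : 0 < u := hu.1
    have h1 := hclaim u hu
    have h2 : Real.log c ≤ (1 / u) * Real.log (β j) := by
      have := Real.log_le_log hc0 h1
      rwa [Real.log_rpow (hβ j).1] at this
    have h3 : 1 / u ≤ D := by
      rw [hD, le_div_iff_of_neg hlogβ]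
      linarith [h2]
    have h4 : 1 / D ≤ 1 / (1 / u) := one_div_le_one_div_of_le (by positivity) h3
    rwa [one_div_one_div] at h4
  have := le_csInf hne hbound
  rw [sizeWrt_eq]
  have : (0:ℝ) < 1 / D := by positivity
  linarith [le_csInf hne hbound]

section Thickness

variable {C : Set (Fin n → ℝ)} {e : GapEnum β C}

lemma no_gapDist_zero (hbot : thicknessA β C e ≠ ⊥) (hJ : e.J ≠ ∅) :
    ¬ ∃ k ∈ e.J, gapDist β C e k = 0 := by
  intro h
  apply hbot
  rw [thicknessA, if_neg hJ, if_pos h]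

lemma gapDist_pos (hbot : thicknessA β C e ≠ ⊥) (hJ : e.J ≠ ∅) {k : ℕ} (hk : k ∈ e.J) :
    0 < gapDist β C e k := by
  rcases (gapDist_nonneg β C e k).lt_or_eq with h | h
  · exact h
  · exact absurd ⟨k, hk, h.symm⟩ (no_gapDist_zero hbot hJ)

lemma sizeSet_gap_nonempty (hβ : ∀ j, β j ∈ Set.Ioo (0 : ℝ) 1) (hsub : C ⊆ closedBall 0 1)
    (hbot : thicknessA β C e ≠ ⊥) (hJ : e.J ≠ ∅) {k : ℕ} (hk : k ∈ e.J) :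
    (sizeSet β (e.G k)).Nonempty := by
  rw [Set.nonempty_iff_ne_empty]
  intro h
  exact (gapDist_pos hbot hJ hk).ne'
    (gapDist_eq_zero_of_sizeSet_empty hβ hsub hk h)

lemma sizeWrt_gap_pos (hn : 0 < n) (hβ : ∀ j, β j ∈ Set.Ioo (0 : ℝ) 1) (hC : IsClosed C)
    (hsub : C ⊆ closedBall 0 1) (hbot : thicknessA β C e ≠ ⊥) (hJ : e.J ≠ ∅)
    {k : ℕ} (hk : k ∈ e.J) : 0 < sizeWrt β (e.G k) :=
  sizeWrt_pos_of_gap hn hβ (gap_isOpen hC (e.isGap k hk).1) (gap_nonempty (e.isGap k hk).1)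
    (sizeSet_gap_nonempty hβ hsub hbot hJ hk)

lemma thickness_le_term (hbot : thicknessA β C e ≠ ⊥) (hJ : e.J ≠ ∅) {k : ℕ} (hk : k ∈ e.J) :
    thicknessA β C e ≤ invE (sizeWrt β (e.G k)) - invE (gapDist β C e k) := by
  conv_lhs => rw [thicknessA, if_neg hJ, if_neg (no_gapDist_zero hbot hJ)]
  exact iInf₂_le k hk

lemma thickness_le_real (hn : 0 < n) (hβ : ∀ j, β j ∈ Set.Ioo (0 : ℝ) 1) (hC : IsClosed C)
    (hsub : C ⊆ closedBall 0 1) (hbot : thicknessA β C e ≠ ⊥) (hJ : e.J ≠ ∅)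
    {k : ℕ} (hk : k ∈ e.J) :
    thicknessA β C e ≤ (((sizeWrt β (e.G k))⁻¹ - (gapDist β C e k)⁻¹ : ℝ) : EReal) := by
  have h1 := thickness_le_term hbot hJ hk
  rw [invE, if_neg (sizeWrt_gap_pos hn hβ hC hsub hbot hJ hk).ne',
    invE, if_neg (gapDist_pos hbot hJ hk).ne', ← EReal.coe_sub] at h1
  exact h1

lemma thickness_ne_top (hn : 0 < n) (hβ : ∀ j, β j ∈ Set.Ioo (0 : ℝ) 1) (hC : IsClosed C)
    (hsub : C ⊆ closedBall 0 1) (hbot : thicknessA β C e ≠ ⊥) (hJ : e.J ≠ ∅) :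
    thicknessA β C e ≠ ⊤ := by
  obtain ⟨k, hk⟩ := Set.nonempty_iff_ne_empty.mpr hJ
  intro htop
  have := thickness_le_real hn hβ hC hsub hbot hJ hk
  rw [htop] at this
  exact absurd (this.trans_lt (EReal.coe_lt_top _)) (lt_irrefl _)

lemma thickness_toReal_le (hn : 0 < n) (hβ : ∀ j, β j ∈ Set.Ioo (0 : ℝ) 1) (hC : IsClosed C)
    (hsub : C ⊆ closedBall 0 1) (hbot : thicknessA β C e ≠ ⊥) (hJ : e.J ≠ ∅)
    {k : ℕ} (hk : k ∈ e.J) :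
    (thicknessA β C e).toReal ≤ (sizeWrt β (e.G k))⁻¹ - (gapDist β C e k)⁻¹ := by
  have h1 := thickness_le_real hn hβ hC hsub hbot hJ hk
  rw [← EReal.coe_toReal (thickness_ne_top hn hβ hC hsub hbot hJ) hbot] at h1
  exact_mod_cast h1

end Thickness

lemma finite_large_gaps (hn : 0 < n) (hβ : ∀ j, β j ∈ Set.Ioo (0 : ℝ) 1)
    {C : Set (Fin n → ℝ)} (hC : IsClosed C) (hsub : C ⊆ closedBall 0 1)
    (e : GapEnum β C) (hbot : thicknessA β C e ≠ ⊥) (hJ : e.J ≠ ∅) {L : ℝ} (hL : 0 < L) :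
    {k | k ∈ e.J ∧ L ≤ sizeWrt β (e.G k)}.Finite := by
  by_contra hinf
  replace hinf : {k | k ∈ e.J ∧ L ≤ sizeWrt β (e.G k)}.Infinite := hinf
  set T := {k | k ∈ e.J ∧ L ≤ sizeWrt β (e.G k)} with hT
  set r : ℝ := (thicknessA β C e).toReal with hr
  have hrk : ∀ k ∈ T, (gapDist β C e k)⁻¹ ≤ L⁻¹ - r := by
    intro k hk
    have h1 := thickness_toReal_le hn hβ hC hsub hbot hJ hk.1
    have h2 : (sizeWrt β (e.G k))⁻¹ ≤ L⁻¹ := inv_anti₀ hL hk.2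
    rw [← hr] at h1
    linarith
  have hM : 0 < L⁻¹ - r := by
    obtain ⟨k, hk⟩ := hinf.nonempty
    have h1 := hrk k hk
    have hGD := gapDist_pos hbot hJ hk.1
    have h2 : 0 < (gapDist β C e k)⁻¹ := by positivity
    linarith
  set ρ : ℝ := (L⁻¹ - r)⁻¹ with hρ
  have hρ0 : 0 < ρ := by positivity
  have hGDρ : ∀ k ∈ T, ρ ≤ gapDist β C e k := by
    intro k hk
    have h1 := hrk k hk
    have hGD := gapDist_pos hbot hJ hk.1
    have h3 : (L⁻¹ - r)⁻¹ ≤ ((gapDist β C e k)⁻¹)⁻¹ := inv_anti₀ (by positivity) h1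
    rwa [inv_inv] at h3
  set u : ℝ := ρ / 2 with hu
  have hu0 : 0 < u := by positivity
  have hex : ∀ k, k ∈ e.J → ∃ x, x ∈ e.G k := fun k hk => gap_nonempty (e.isGap k hk).1
  choose! p hp using hex
  have hsep : ∀ k ∈ T, ∀ l ∈ T, k < l → ∃ j, 2 * (β j) ^ (1 / u) < |p k j - p l j| := by
    intro k hk l hl hkl
    by_contra hcon
    push_neg at hcon
    have humem : u ∈ gdSet β C e l := by
      refine ⟨hu0, fun i => (p k i + p l i) / 2, ⟨p l, ?_, hp l hl.1⟩, ⟨p k, ?_, Or.inl ?_⟩⟩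
      · intro i
        have habs := abs_le.mp (hcon i)
        rw [show p l i - (fun i => (p k i + p l i) / 2) i = (p l i - p k i) / 2 by simp; ring]
        rw [abs_le]
        constructor <;> [linarith [habs.1, habs.2]; linarith [habs.1, habs.2]]
      · intro i
        have habs := abs_le.mp (hcon i)
        rw [show p k i - (fun i => (p k i + p l i) / 2) i = (p k i - p l i) / 2 by simp; ring]
        rw [abs_le]
        constructor <;> [linarith [habs.1, habs.2]; linarith [habs.1, habs.2]]
      · exact Set.mem_biUnion ⟨hk.1, hkl⟩ (hp k hk.1)
    have h1 := gapDist_le humem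
    have h2 := hGDρ l hl
    rw [hu] at h1
    linarith
  have hune : (Finset.univ : Finset (Fin n)).Nonempty := ⟨⟨0, hn⟩, Finset.mem_univ _⟩
  set rr : ℝ := Finset.univ.inf' hune (fun j : Fin n => (β j) ^ (1 / u)) with hrr
  have hrr0 : 0 < rr := by
    rw [hrr, Finset.lt_inf'_iff]
    intro j _
    exact Real.rpow_pos_of_pos (hβ j).1 _
  have hrrle : ∀ j, rr ≤ (β j) ^ (1 / u) := fun j => Finset.inf'_le _ (Finset.mem_univ j)
  have hTball : Set.MapsTo p T (closedBall (0 : Fin n → ℝ) 1) := fun k hk =>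
    bgap_subset_closedBall hsub (e.isGap k hk.1) (hp k hk.1)
  have htb := (isCompact_closedBall (0 : Fin n → ℝ) 1).totallyBounded
  rw [Metric.totallyBounded_iff] at htb
  obtain ⟨F, hFfin, hFcov⟩ := htb rr hrr0
  have hchoice : ∀ k, k ∈ T → ∃ y, y ∈ F ∧ p k ∈ ball y rr := by
    intro k hk
    have h1 := hFcov (hTball hk)
    simpa using h1
  choose! g hgF hgb using hchoice
  have contra : ∀ a ∈ T, ∀ b' ∈ T, a < b' → g a = g b' → False := by
    intro a ha b' hb' hab hg
    obtain ⟨j, hj⟩ := hsep a ha b' hb' hab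
    have h1 : dist (p a j) (p b' j) ≤ dist (p a) (p b') := dist_le_pi_dist _ _ _
    have h2 : dist (p a) (p b') < 2 * rr := by
      have h3 := hgb a ha
      have h4 := hgb b' hb'
      rw [mem_ball] at h3 h4
      rw [hg] at h3
      have h6 : dist (g b') (p b') = dist (p b') (g b') := dist_comm _ _
      calc dist (p a) (p b') ≤ dist (p a) (g b') + dist (g b') (p b') := dist_triangle _ _ _
        _ < 2 * rr := by linarith
    rw [Real.dist_eq] at h1
    have h5 := hrrle j
    linarith
  obtain ⟨k, hk, l, hl, hkl, hgkl⟩ :=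
    hinf.exists_ne_map_eq_of_mapsTo (fun k hk => hgF k hk) hFfin
  rcases hkl.lt_or_gt with h | h
  · exact contra k hk l hl h hgkl
  · exact contra l hl k hk h hgkl.symm

lemma tendsto_diam_of_tendsto (hn : 0 < n) (hβ : ∀ j, β j ∈ Set.Ioo (0 : ℝ) 1)
    {C : Set (Fin n → ℝ)} (hC : IsClosed C) (hsub : C ⊆ closedBall 0 1)
    (e : GapEnum β C) (hbot : thicknessA β C e ≠ ⊥) (hJ : e.J ≠ ∅)
    {σ : ℕ → ℕ} (hσJ : ∀ i, σ i ∈ e.J) (hσ : Filter.Tendsto σ Filter.atTop Filter.atTop) :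
    Filter.Tendsto (fun i => Metric.diam (e.G (σ i))) Filter.atTop (nhds 0) := by
  rw [Metric.tendsto_atTop]
  intro ε hε
  have hune : (Finset.univ : Finset (Fin n)).Nonempty := ⟨⟨0, hn⟩, Finset.mem_univ _⟩
  set b : ℝ := Finset.univ.sup' hune β with hb
  have hb0 : 0 < b := lt_of_lt_of_le (hβ ⟨0, hn⟩).1 (Finset.le_sup' β (Finset.mem_univ _))
  have hb1 : b < 1 := by
    rw [hb, Finset.sup'_lt_iff]
    intro j _
    exact (hβ j).2
  have hbj : ∀ j, β j ≤ b := fun j => Finset.le_sup' β (Finset.mem_univ j)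
  obtain ⟨m, hm⟩ : ∃ m : ℕ, 2 * b ^ (m + 1) < ε := by
    have h1 := tendsto_pow_atTop_nhds_zero_of_lt_one hb0.le hb1
    have h2 : Filter.Tendsto (fun m : ℕ => 2 * b ^ m) Filter.atTop (nhds 0) := by
      simpa using h1.const_mul 2
    obtain ⟨m₀, hm₀⟩ := Filter.eventually_atTop.mp (h2.eventually (eventually_lt_nhds hε))
    exact ⟨m₀, hm₀ (m₀ + 1) (Nat.le_succ m₀)⟩
  set L : ℝ := 1 / ((m : ℝ) + 1) with hL
  have hL0 : 0 < L := by positivity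
  have hdiam : ∀ k ∈ e.J, sizeWrt β (e.G k) < L → Metric.diam (e.G k) ≤ 2 * b ^ (m + 1) := by
    intro k hk hkL
    obtain ⟨-, z, hz⟩ := mem_sizeSet_of_lt hβ (sizeSet_gap_nonempty hβ hsub hbot hJ hk) hkL
    have hβL : ∀ j, (β j) ^ (1 / L) ≤ b ^ (m + 1) := by
      intro j
      rw [hL, one_div_one_div]
      calc (β j) ^ ((m : ℝ) + 1) = (β j) ^ (m + 1 : ℕ) := by
            rw [← Real.rpow_natCast (β j) (m + 1)]; norm_num
        _ ≤ b ^ (m + 1) := pow_le_pow_left₀ (hβ j).1.le (hbj j) _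
    apply Metric.diam_le_of_forall_dist_le (by positivity)
    intro x hx y hy
    rw [dist_pi_le_iff (by positivity)]
    intro j
    have h1 := hz hx j
    have h2 := hz hy j
    rw [Real.dist_eq]
    have h3 := abs_sub_le (x j) (z j) (y j)
    rw [abs_sub_comm (z j) (y j)] at h3
    linarith [hβL j]
  have hfin := finite_large_gaps hn hβ hC hsub e hbot hJ hL0
  obtain ⟨K, hK⟩ := hfin.bddAbove
  obtain ⟨N, hN⟩ := Filter.eventually_atTop.mp (hσ.eventually_gt_atTop K)
  refine ⟨N, fun i hi => ?_⟩
  have hKi := hN i hi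
  have hsz : sizeWrt β (e.G (σ i)) < L := by
    by_contra hge
    push_neg at hge
    have hmem : σ i ∈ {k | k ∈ e.J ∧ L ≤ sizeWrt β (e.G k)} := ⟨hσJ i, hge⟩
    exact absurd (hK hmem) (not_le.mpr hKi)
  have hd := hdiam (σ i) (hσJ i) hsz
  rw [Real.dist_eq, sub_zero, abs_of_nonneg Metric.diam_nonneg]
  linarith

lemma gapDist_le_of_cover {C₂ : Set (Fin n → ℝ)} (e₂ : GapEnum β C₂) {t : ℕ}
    {G₁ : Set (Fin n → ℝ)}
    (hcover : frontier G₁ ⊆ (⋃ j ∈ e₂.J ∩ Set.Iic t, e₂.G j) ∪ unboundedGap C₂)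
    (hmeet : (e₂.G t ∩ frontier G₁).Nonempty)
    (hout : (frontier G₁ \ e₂.G t).Nonempty)
    {u : ℝ} (hu : u ∈ sizeSet β G₁) : u ∈ gdSet β C₂ e₂ t := by
  obtain ⟨hu0, z, hz⟩ := hu
  have hcl : frontier G₁ ⊆ affBox β (1 / u) z :=
    frontier_subset_closure.trans (closure_minimal hz isClosed_affBox)
  refine ⟨hu0, z, ?_, ?_⟩
  · obtain ⟨b, hb2, hb1⟩ := hmeet
    exact ⟨b, hcl hb1, hb2⟩
  · obtain ⟨c, hc1, hc2⟩ := hout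
    refine ⟨c, hcl hc1, ?_⟩
    rcases hcover hc1 with h | h
    · left
      rw [Set.mem_iUnion₂] at h
      obtain ⟨j, ⟨hjJ, hjle⟩, hcj⟩ := h
      have hjlt : j < t := lt_of_le_of_ne hjle (fun h' => hc2 (h' ▸ hcj))
      exact Set.mem_biUnion ⟨hjJ, hjlt⟩ hcj
    · right; exact h

lemma step_linked {C₁ C₂ : Set (Fin n → ℝ)} (hn : 0 < n)
    (hβ : ∀ j, β j ∈ Set.Ioo (0 : ℝ) 1) (hC₁ : IsCompact C₁) (hC₂ : IsCompact C₂)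
    (hsub₁ : C₁ ⊆ closedBall 0 1) (hsub₂ : C₂ ⊆ closedBall 0 1)
    (hdisj : C₁ ∩ C₂ = ∅) (hBG : BGLinked C₁ C₂)
    (e₁ : GapEnum β C₁) (e₂ : GapEnum β C₂)
    (hbot₁ : thicknessA β C₁ e₁ ≠ ⊥) (hbot₂ : thicknessA β C₂ e₂ ≠ ⊥)
    (hτ : 0 < thicknessA β C₁ e₁ + thicknessA β C₂ e₂)
    {s t : ℕ} (hs : s ∈ e₁.J) (ht : t ∈ e₂.J) (hL : Linked (e₁.G s) (e₂.G t)) :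
    (∃ t' ∈ e₂.J, t < t' ∧ Linked (e₁.G s) (e₂.G t')) ∨
    (∃ s' ∈ e₁.J, s < s' ∧ Linked (e₁.G s') (e₂.G t)) := by
  by_contra hcon
  push_neg at hcon
  obtain ⟨h1, h2⟩ := hcon
  have hJ₁ : e₁.J ≠ ∅ := Set.nonempty_iff_ne_empty.mp ⟨s, hs⟩
  have hJ₂ : e₂.J ≠ ∅ := Set.nonempty_iff_ne_empty.mp ⟨t, ht⟩
  have hdC₁ : C₁ ⊆ C₂ᶜ := fun x hx hx2 => Set.eq_empty_iff_forall_notMem.mp hdisj x ⟨hx, hx2⟩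
  have hdC₂ : C₂ ⊆ C₁ᶜ := fun x hx hx1 => Set.eq_empty_iff_forall_notMem.mp hdisj x ⟨hx1, hx⟩
  have cover₁ : frontier (e₁.G s) ⊆ (⋃ j ∈ e₂.J ∩ Set.Iic t, e₂.G j) ∪ unboundedGap C₂ := by
    intro x hx
    have hxC₁ : x ∈ C₁ := gap_frontier_subset hC₁.isClosed (e₁.isGap s hs).1 hx
    have hxC₂ : x ∈ C₂ᶜ := hdC₁ hxC₁
    by_cases hb : Bornology.IsBounded (connectedComponentIn C₂ᶜ x)
    · have hgap : IsBoundedGap C₂ (connectedComponentIn C₂ᶜ x) := ⟨⟨x, hxC₂, rfl⟩, hb⟩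
      obtain ⟨j, hj, hjeq⟩ := e₂.surj _ hgap
      have hxH : x ∈ e₂.G j := by rw [hjeq]; exact mem_connectedComponentIn hxC₂
      have hmeets : (e₂.G j ∩ e₁.G s).Nonempty := by
        have hopen : IsOpen (e₂.G j) := gap_isOpen hC₂.isClosed (e₂.isGap j hj).1
        have hnb : e₂.G j ∈ nhds x := hopen.mem_nhds hxH
        exact mem_closure_iff_nhds.mp (frontier_subset_closure hx) _ hnb
      have hjt : j ≤ t := by
        by_contra hlt
        push_neg at hlt
        rcases hBG (e₁.G s) (e₂.G j) (e₁.isGap s hs) (e₂.isGap j hj) with hl | hl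
        · exact h1 j hj hlt hl
        · obtain ⟨y, hy⟩ := hmeets
          exact Set.eq_empty_iff_forall_notMem.mp hl y ⟨hy.2, hy.1⟩
      exact Or.inl (Set.mem_biUnion ⟨hj, hjt⟩ hxH)
    · exact Or.inr ⟨hxC₂, hb⟩
  have cover₂ : frontier (e₂.G t) ⊆ (⋃ j ∈ e₁.J ∩ Set.Iic s, e₁.G j) ∪ unboundedGap C₁ := by
    intro x hx
    have hxC₂ : x ∈ C₂ := gap_frontier_subset hC₂.isClosed (e₂.isGap t ht).1 hx
    have hxC₁ : x ∈ C₁ᶜ := hdC₂ hxC₂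
    by_cases hb : Bornology.IsBounded (connectedComponentIn C₁ᶜ x)
    · have hgap : IsBoundedGap C₁ (connectedComponentIn C₁ᶜ x) := ⟨⟨x, hxC₁, rfl⟩, hb⟩
      obtain ⟨j, hj, hjeq⟩ := e₁.surj _ hgap
      have hxH : x ∈ e₁.G j := by rw [hjeq]; exact mem_connectedComponentIn hxC₁
      have hmeets : (e₁.G j ∩ e₂.G t).Nonempty := by
        have hopen : IsOpen (e₁.G j) := gap_isOpen hC₁.isClosed (e₁.isGap j hj).1
        have hnb : e₁.G j ∈ nhds x := hopen.mem_nhds hxH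
        exact mem_closure_iff_nhds.mp (frontier_subset_closure hx) _ hnb
      have hjs : j ≤ s := by
        by_contra hlt
        push_neg at hlt
        rcases hBG (e₁.G j) (e₂.G t) (e₁.isGap j hj) (e₂.isGap t ht) with hl | hl
        · exact h2 j hj hlt hl
        · obtain ⟨y, hy⟩ := hmeets
          exact Set.eq_empty_iff_forall_notMem.mp hl y hy
      exact Or.inl (Set.mem_biUnion ⟨hj, hjs⟩ hxH)
    · exact Or.inr ⟨hxC₁, hb⟩
  have hnot₁ : (e₂.G t \ e₁.G s).Nonempty := by
    rw [Set.nonempty_iff_ne_empty]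
    intro hemp
    have hsubst : e₂.G t ⊆ e₁.G s := Set.diff_eq_empty.mp hemp
    obtain ⟨y, hy1, hy2⟩ := hL.2.2
    have hyC₂ : y ∈ C₂ := gap_frontier_subset hC₂.isClosed (e₂.isGap t ht).1 hy1
    have hyfr : y ∈ frontier (e₁.G s) := by
      rw [← closure_diff_interior]
      refine ⟨(closure_mono hsubst) (frontier_subset_closure hy1), ?_⟩
      rw [(gap_isOpen hC₁.isClosed (e₁.isGap s hs).1).interior_eq]
      exact hy2
    exact hdC₂ hyC₂ (gap_frontier_subset hC₁.isClosed (e₁.isGap s hs).1 hyfr)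
  have hnot₂ : (e₁.G s \ e₂.G t).Nonempty := by
    rw [Set.nonempty_iff_ne_empty]
    intro hemp
    have hsubst : e₁.G s ⊆ e₂.G t := Set.diff_eq_empty.mp hemp
    obtain ⟨y, hy1, hy2⟩ := hL.2.1
    have hyC₁ : y ∈ C₁ := gap_frontier_subset hC₁.isClosed (e₁.isGap s hs).1 hy1
    have hyfr : y ∈ frontier (e₂.G t) := by
      rw [← closure_diff_interior]
      refine ⟨(closure_mono hsubst) (frontier_subset_closure hy1), ?_⟩
      rw [(gap_isOpen hC₂.isClosed (e₂.isGap t ht).1).interior_eq]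
      exact hy2
    exact hdC₁ hyC₁ (gap_frontier_subset hC₂.isClosed (e₂.isGap t ht).1 hyfr)
  have hmeet₁ : (e₂.G t ∩ frontier (e₁.G s)).Nonempty :=
    preconn_inter_frontier (gap_preconn (e₂.isGap t ht).1)
      ⟨hL.1.choose, hL.1.choose_spec.2, hL.1.choose_spec.1⟩ hnot₁
  have hmeet₂ : (e₁.G s ∩ frontier (e₂.G t)).Nonempty :=
    preconn_inter_frontier (gap_preconn (e₁.isGap s hs).1) hL.1 hnot₂
  have hSne₁ : (sizeSet β (e₁.G s)).Nonempty := sizeSet_gap_nonempty hβ hsub₁ hbot₁ hJ₁ hs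
  have hSne₂ : (sizeSet β (e₂.G t)).Nonempty := sizeSet_gap_nonempty hβ hsub₂ hbot₂ hJ₂ ht
  have hGD₂le : gapDist β C₂ e₂ t ≤ sizeWrt β (e₁.G s) := by
    rw [sizeWrt_eq]
    exact le_csInf hSne₁ fun u hu =>
      gapDist_le (gapDist_le_of_cover e₂ cover₁ hmeet₁ hL.2.1 hu)
  have hGD₁le : gapDist β C₁ e₁ s ≤ sizeWrt β (e₂.G t) := by
    rw [sizeWrt_eq]
    exact le_csInf hSne₂ fun u hu =>
      gapDist_le (gapDist_le_of_cover e₁ cover₂ hmeet₂ hL.2.2 hu)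
  have hS₁ := sizeWrt_gap_pos hn hβ hC₁.isClosed hsub₁ hbot₁ hJ₁ hs
  have hS₂ := sizeWrt_gap_pos hn hβ hC₂.isClosed hsub₂ hbot₂ hJ₂ ht
  have hD₁ := gapDist_pos hbot₁ hJ₁ hs
  have hD₂ := gapDist_pos hbot₂ hJ₂ ht
  have k₁ := thickness_le_real hn hβ hC₁.isClosed hsub₁ hbot₁ hJ₁ hs
  have k₂ := thickness_le_real hn hβ hC₂.isClosed hsub₂ hbot₂ hJ₂ ht
  have hsum := add_le_add k₁ k₂
  rw [← EReal.coe_add] at hsum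
  have i1 : (sizeWrt β (e₂.G t))⁻¹ ≤ (gapDist β C₁ e₁ s)⁻¹ := inv_anti₀ hD₁ hGD₁le
  have i2 : (sizeWrt β (e₁.G s))⁻¹ ≤ (gapDist β C₂ e₂ t)⁻¹ := inv_anti₀ hD₂ hGD₂le
  have hreal : (sizeWrt β (e₁.G s))⁻¹ - (gapDist β C₁ e₁ s)⁻¹ +
      ((sizeWrt β (e₂.G t))⁻¹ - (gapDist β C₂ e₂ t)⁻¹) ≤ 0 := by linarith
  have hle : thicknessA β C₁ e₁ + thicknessA β C₂ e₂ ≤ (0 : EReal) := by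
    refine hsum.trans ?_
    exact_mod_cast hreal
  exact absurd (lt_of_lt_of_le hτ hle) (lt_irrefl _)

end AuxLemmas

/-- existence of a sequence of pairs of linked bounded gaps for a
BG linked pair of disjoint sets with positive total affine thickness. -/
theorem exists_sequence_of_linked_gaps (n : ℕ)
    (β : Fin n → ℝ) (hβ : ∀ j, β j ∈ Set.Ioo (0 : ℝ) 1)
    (C₁ C₂ : Set (Fin n → ℝ)) (hC₁ : IsCompact C₁) (hC₂ : IsCompact C₂)
    (hne₁ : C₁.Nonempty) (hne₂ : C₂.Nonempty)
    (hsub₁ : C₁ ⊆ closedBall 0 1) (hsub₂ : C₂ ⊆ closedBall 0 1)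
    (hBG : BGLinked C₁ C₂)
    (e₁ : GapEnum β C₁) (e₂ : GapEnum β C₂)
    (hτ : 0 < thicknessA β C₁ e₁ + thicknessA β C₂ e₂)
    (hdisj : C₁ ∩ C₂ = ∅)
    (hG₁ : ∃ G₁, IsBoundedGap C₁ G₁ ∧ ¬ frontier G₁ ⊆ unboundedGap C₂)
    (hG₂ : ∃ G₂, IsBoundedGap C₂ G₂ ∧ ¬ frontier G₂ ⊆ unboundedGap C₁) :
    ∃ s t : ℕ → ℕ,
      (∀ i, s i ∈ e₁.J ∧ t i ∈ e₂.J ∧ Linked (e₁.G (s i)) (e₂.G (t i))) ∧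
      (∀ i, (s (i + 1) = s i ∧ t i < t (i + 1)) ∨ (s i < s (i + 1) ∧ t (i + 1) = t i)) ∧
      (Filter.Tendsto (fun i => Metric.diam (e₁.G (s i))) Filter.atTop (nhds 0) ∨
        Filter.Tendsto (fun i => Metric.diam (e₂.G (t i))) Filter.atTop (nhds 0)) := by
  classical
  rcases Nat.eq_zero_or_pos n with hn0 | hn
  · exfalso
    subst hn0
    obtain ⟨x, hx⟩ := hne₁
    obtain ⟨y, hy⟩ := hne₂
    have hxy : x = y := funext fun i => i.elim0
    exact Set.eq_empty_iff_forall_notMem.mp hdisj x ⟨hx, hxy ▸ hy⟩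
  have hbot₁ : thicknessA β C₁ e₁ ≠ ⊥ := by
    intro h
    rw [h, EReal.bot_add] at hτ
    exact not_lt_bot hτ
  have hbot₂ : thicknessA β C₂ e₂ ≠ ⊥ := by
    intro h
    rw [h, EReal.add_bot] at hτ
    exact not_lt_bot hτ
  obtain ⟨G₁, hG₁gap, hG₁f⟩ := hG₁
  obtain ⟨x, hxf, hxE⟩ := Set.not_subset.mp hG₁f
  have hxC₁ : x ∈ C₁ := gap_frontier_subset hC₁.isClosed hG₁gap.1 hxf
  have hxC₂ : x ∈ C₂ᶜ := fun hx2 => Set.eq_empty_iff_forall_notMem.mp hdisj x ⟨hxC₁, hx2⟩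
  have hbH : Bornology.IsBounded (connectedComponentIn C₂ᶜ x) := by
    by_contra hb
    exact hxE ⟨hxC₂, hb⟩
  have hHgap : IsBoundedGap C₂ (connectedComponentIn C₂ᶜ x) := ⟨⟨x, hxC₂, rfl⟩, hbH⟩
  obtain ⟨t₀, ht₀J, ht₀⟩ := e₂.surj _ hHgap
  obtain ⟨s₀, hs₀J, hs₀⟩ := e₁.surj _ hG₁gap
  have hxG : x ∈ e₂.G t₀ := by rw [ht₀]; exact mem_connectedComponentIn hxC₂
  have hmeet0 : (e₁.G s₀ ∩ e₂.G t₀).Nonempty := by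
    have hopen : IsOpen (e₂.G t₀) := gap_isOpen hC₂.isClosed (e₂.isGap t₀ ht₀J).1
    have hnb : e₂.G t₀ ∈ nhds x := hopen.mem_nhds hxG
    have hxcl : x ∈ closure (e₁.G s₀) := by rw [hs₀]; exact frontier_subset_closure hxf
    obtain ⟨w, hw1, hw2⟩ := mem_closure_iff_nhds.mp hxcl _ hnb
    exact ⟨w, hw2, hw1⟩
  have hlink0 : Linked (e₁.G s₀) (e₂.G t₀) := by
    rcases hBG (e₁.G s₀) (e₂.G t₀) (e₁.isGap s₀ hs₀J) (e₂.isGap t₀ ht₀J) with h | h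
    · exact h
    · rw [h] at hmeet0
      exact absurd hmeet0 Set.not_nonempty_empty
  set P : ℕ × ℕ → Prop := fun q => q.1 ∈ e₁.J ∧ q.2 ∈ e₂.J ∧ Linked (e₁.G q.1) (e₂.G q.2)
    with hP
  have hstep : ∀ q : {q : ℕ × ℕ // P q}, ∃ q' : {q : ℕ × ℕ // P q},
      (q'.1.1 = q.1.1 ∧ q.1.2 < q'.1.2) ∨ (q.1.1 < q'.1.1 ∧ q'.1.2 = q.1.2) := by
    rintro ⟨⟨a, b⟩, ha, hb, hl⟩
    rcases step_linked hn hβ hC₁ hC₂ hsub₁ hsub₂ hdisj hBG e₁ e₂ hbot₁ hbot₂ hτ ha hb hl with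
      ⟨t', ht', hlt, hl'⟩ | ⟨s', hs', hlt, hl'⟩
    · exact ⟨⟨(a, t'), ha, ht', hl'⟩, Or.inl ⟨rfl, hlt⟩⟩
    · exact ⟨⟨(s', b), hs', hb, hl'⟩, Or.inr ⟨hlt, rfl⟩⟩
  choose F hF using hstep
  set seq : ℕ → {q : ℕ × ℕ // P q} := fun i => F^[i] ⟨(s₀, t₀), hs₀J, ht₀J, hlink0⟩ with hseqdef
  have hseq : ∀ i, seq (i + 1) = F (seq i) := fun i => Function.iterate_succ_apply' F i _
  have hstepprop : ∀ i, ((seq (i + 1)).1.1 = (seq i).1.1 ∧ (seq i).1.2 < (seq (i + 1)).1.2) ∨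
      ((seq i).1.1 < (seq (i + 1)).1.1 ∧ (seq (i + 1)).1.2 = (seq i).1.2) := by
    intro i
    rw [hseq i]
    exact hF (seq i)
  have hJ₁ : e₁.J ≠ ∅ := Set.nonempty_iff_ne_empty.mp ⟨s₀, hs₀J⟩
  have hJ₂ : e₂.J ≠ ∅ := Set.nonempty_iff_ne_empty.mp ⟨t₀, ht₀J⟩
  have hmono_s : Monotone fun i => (seq i).1.1 := by
    apply monotone_nat_of_le_succ
    intro i
    rcases hstepprop i with ⟨h, -⟩ | ⟨h, -⟩
    · exact h.ge
    · exact h.le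
  have hmono_t : Monotone fun i => (seq i).1.2 := by
    apply monotone_nat_of_le_succ
    intro i
    rcases hstepprop i with ⟨-, h⟩ | ⟨-, h⟩
    · exact h.le
    · exact h.ge
  have hsum : ∀ i, i ≤ (seq i).1.1 + (seq i).1.2 := by
    intro i
    induction i with
    | zero => exact Nat.zero_le _
    | succ i ih =>
      rcases hstepprop i with ⟨h1, h2⟩ | ⟨h1, h2⟩ <;> omega
  refine ⟨fun i => (seq i).1.1, fun i => (seq i).1.2, fun i => (seq i).2, hstepprop, ?_⟩
  by_cases hbnd : ∀ N : ℕ, ∃ i, N ≤ (seq i).1.1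
  · left
    have htend : Filter.Tendsto (fun i => (seq i).1.1) Filter.atTop Filter.atTop :=
      tendsto_atTop_atTop_of_monotone hmono_s hbnd
    exact tendsto_diam_of_tendsto hn hβ hC₁.isClosed hsub₁ e₁ hbot₁ hJ₁
      (fun i => ((seq i).2).1) htend
  · right
    push_neg at hbnd
    obtain ⟨N, hN⟩ := hbnd
    have hunb : ∀ b, ∃ i, b ≤ (seq i).1.2 := by
      intro b
      refine ⟨b + N, ?_⟩
      have h1 := hsum (b + N)
      have h2 := hN (b + N)
      omega
    have htend : Filter.Tendsto (fun i => (seq i).1.2) Filter.atTop Filter.atTop :=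
      tendsto_atTop_atTop_of_monotone hmono_t hunb
    exact tendsto_diam_of_tendsto hn hβ hC₂.isClosed hsub₂ e₂ hbot₂ hJ₂
      (fun i => ((seq i).2).2.1) htend
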